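/- Let F be a finite field with q elements, ψ : F → ℂ a nontrivial additive character, 𝔤 = M_n(F) the space of all n×n matrices, 𝔟 ⊂ 𝔤 the upper triangular matrices, and 𝔱 ≅ F^n the diagonal matrices. For f : 𝔱 → ℂ define J(f) : 𝔤 → ℂ by J(f)(x) = Σ_{g ∈ GL(n,F), g⁻¹xg ∈ 𝔟} f(d(g⁻¹xg)), where d extracts the diagonal. Then for every f : 𝔱 → ℂ and every y ∈ 𝔤: Σ_{x ∈ 𝔤} ψ(tr(xy))·J(f)(x) = q^{n(n−1)/2} · J(f̂)(y), where f̂(t') = Σ_{t ∈ 𝔱} f(t)·ψ(tr(t t')). (This is the function-theoretic content of the Lemma in Section 'gln': the Fourier–Deligne transform F_𝔤 on the Lie algebra, defined using the trace pairing (x,y) ↦ tr(xy), commutes with the induction functor: F_𝔤 ∘ Ind_𝔱^𝔤 ≅ Ind_𝔱^𝔤 ∘ F_𝔱.) -/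

import Mathlib

open scoped Classical in
/-- The induction of a function `f` on the diagonal Cartan `𝔱 ≅ F^n` to an
`Ad`-invariant function on `𝔤 = M_n(F)`:
`J(f)(x) = Σ_{g ∈ GL(n,F), g⁻¹xg ∈ 𝔟} f(d(g⁻¹xg))`, where `𝔟` is the upper
triangular matrices and `d` extracts the diagonal. -/
noncomputable def indLie {F : Type} [Field F] [Fintype F] [DecidableEq F] {n : ℕ}
    (f : (Fin n → F) → ℂ) (x : Matrix (Fin n) (Fin n) F) : ℂ :=
  ∑ g : GL (Fin n) F,
    if ∀ i j : Fin n, j < i →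
        (((g⁻¹ : GL (Fin n) F) : Matrix (Fin n) (Fin n) F) * x *
          (g : Matrix (Fin n) (Fin n) F)) i j = 0
    then f (fun i => (((g⁻¹ : GL (Fin n) F) : Matrix (Fin n) (Fin n) F) * x *
          (g : Matrix (Fin n) (Fin n) F)) i i)
    else 0

open scoped Classical

section Aux

variable {F : Type} [Field F] [Fintype F] [DecidableEq F]

private lemma char_map_sum {ι : Type*} (ψ : AddChar F ℂ) (s : Finset ι) (g : ι → F) :
    ψ (∑ i ∈ s, g i) = ∏ i ∈ s, ψ (g i) := by
  induction s using Finset.cons_induction with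
  | empty => simp
  | cons a s ha ih => rw [Finset.sum_cons, Finset.prod_cons, AddChar.map_add_eq_mul, ih]

private lemma sum_pi_char {ι : Type*} [Fintype ι] [DecidableEq ι] (ψ : AddChar F ℂ)
    (hψ : ψ ≠ 1) (w : ι → F) :
    ∑ u : ι → F, ψ (∑ i, u i * w i)
      = if ∀ i, w i = 0 then (Fintype.card F : ℂ) ^ Fintype.card ι else 0 := by
  calc ∑ u : ι → F, ψ (∑ i, u i * w i)
      = ∑ u : ι → F, ∏ i, ψ (u i * w i) := by
        exact Finset.sum_congr rfl fun u _ => char_map_sum ψ _ _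
    _ = ∏ i, ∑ c : F, ψ (c * w i) := (Fintype.prod_sum fun i c => ψ (c * w i)).symm
    _ = ∏ i : ι, (if w i = 0 then (Fintype.card F : ℂ) else 0) :=
        Finset.prod_congr rfl fun i _ => by
          rw [AddChar.sum_mulShift (w i) (AddChar.IsPrimitive.of_ne_one hψ)]
          simp [apply_ite (Nat.cast : ℕ → ℂ)]
    _ = _ := by
        by_cases h : ∀ i, w i = 0
        · simp [h, Finset.prod_const, Finset.card_univ]
        · rw [if_neg h]
          push_neg at h
          obtain ⟨i, hi⟩ := h
          exact Finset.prod_eq_zero (Finset.mem_univ i) (by rw [if_neg hi])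

private lemma card_lt_pairs (n : ℕ) :
    Fintype.card {p : Fin n × Fin n // p.1 < p.2} = n * (n - 1) / 2 := by
  have e : {p : Fin n × Fin n // p.1 < p.2} ≃ Σ j : Fin n, {i : Fin n // i < j} :=
    { toFun := fun p => ⟨p.1.2, p.1.1, p.2⟩
      invFun := fun q => ⟨(q.2.1, q.1), q.2.2⟩
      left_inv := fun p => rfl
      right_inv := fun q => rfl }
  rw [Fintype.card_congr e, Fintype.card_sigma]
  have hcard : ∀ j : Fin n, Fintype.card {i : Fin n // i < j} = (j : ℕ) := by
    intro j
    rw [Fintype.card_subtype]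
    have : Finset.univ.filter (fun i : Fin n => i < j) = Finset.Iio j := by
      ext i; simp
    rw [this, Fin.card_Iio]
  simp_rw [hcard]
  rw [Fin.sum_univ_eq_sum_range (fun i => i) n, Finset.sum_range_id]

variable {n : ℕ}

/-- Split a matrix into (diagonal, strict upper part, strict lower part). -/
private def triEquiv (n : ℕ) (F : Type) [Field F] :
    ((Fin n → F) × ({p : Fin n × Fin n // p.1 < p.2} → F) ×
        ({p : Fin n × Fin n // p.2 < p.1} → F)) ≃ Matrix (Fin n) (Fin n) F where
  toFun x := Matrix.of fun i j =>
    if h : i < j then x.2.1 ⟨(i, j), h⟩ else if h' : j < i then x.2.2 ⟨(i, j), h'⟩ else x.1 i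
  invFun b := ⟨fun i => b i i, fun p => b p.1.1 p.1.2, fun p => b p.1.1 p.1.2⟩
  left_inv x := by
    refine Prod.ext (funext fun i => ?_) (Prod.ext (funext fun p => ?_) (funext fun p => ?_))
    · simp [Matrix.of_apply]
    · simp only [Matrix.of_apply]
      rw [dif_pos p.2]
    · simp only [Matrix.of_apply]
      rw [dif_neg (lt_asymm p.2), dif_pos p.2]
  right_inv b := by
    ext i j
    simp only [Matrix.of_apply]
    rcases lt_trichotomy i j with h | h | h
    · rw [dif_pos h]
    · subst h; simp
    · rw [dif_neg (lt_asymm h), dif_pos h]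

private lemma triEquiv_trace (t : Fin n → F) (u : {p : Fin n × Fin n // p.1 < p.2} → F)
    (z : Matrix (Fin n) (Fin n) F) :
    ((triEquiv n F (t, u, 0) : Matrix (Fin n) (Fin n) F) * z).trace
      = (∑ i, t i * z i i) + ∑ p : {p : Fin n × Fin n // p.1 < p.2}, u p * z p.1.2 p.1.1 := by
  set b := (triEquiv n F (t, u, 0) : Matrix (Fin n) (Fin n) F) with hb
  have h1 : (b * z).trace = ∑ p : Fin n × Fin n, b p.1 p.2 * z p.2 p.1 := by
    rw [Matrix.trace, Fintype.sum_prod_type]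
    exact Finset.sum_congr rfl fun i _ => by rw [Matrix.diag, Matrix.mul_apply]
  rw [h1]
  have h2 : ∀ p : Fin n × Fin n, b p.1 p.2 * z p.2 p.1
      = (if p.1 = p.2 then t p.1 * z p.1 p.1 else 0)
        + (if h : p.1 < p.2 then u ⟨p, h⟩ * z p.2 p.1 else 0) := by
    intro p
    rcases lt_trichotomy p.1 p.2 with h | h | h
    · rw [if_neg h.ne, dif_pos h, zero_add, hb]
      simp only [triEquiv, Equiv.coe_fn_mk, Matrix.of_apply]
      rw [dif_pos h]
    · rw [if_pos h, dif_neg (by omega), add_zero, hb]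
      simp only [triEquiv, Equiv.coe_fn_mk, Matrix.of_apply]
      rw [dif_neg (by omega), dif_neg (by omega), ← h]
    · rw [if_neg (ne_of_gt h), dif_neg (lt_asymm h), add_zero, hb]
      simp only [triEquiv, Equiv.coe_fn_mk, Matrix.of_apply]
      rw [dif_neg (lt_asymm h), dif_pos h, Pi.zero_apply, zero_mul]
  calc ∑ p : Fin n × Fin n, b p.1 p.2 * z p.2 p.1
      = (∑ p : Fin n × Fin n, if p.1 = p.2 then t p.1 * z p.1 p.1 else 0)
        + ∑ p : Fin n × Fin n, if h : p.1 < p.2 then u ⟨p, h⟩ * z p.2 p.1 else 0 := by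
        rw [← Finset.sum_add_distrib]
        exact Finset.sum_congr rfl fun p _ => h2 p
    _ = (∑ i, t i * z i i) + ∑ p : {p : Fin n × Fin n // p.1 < p.2}, u p * z p.1.2 p.1.1 := by
        congr 1
        · rw [Fintype.sum_prod_type]
          exact Finset.sum_congr rfl fun i _ => by simp
        · calc (∑ p : Fin n × Fin n, if h : p.1 < p.2 then u ⟨p, h⟩ * z p.2 p.1 else 0)
              = ∑ p ∈ Finset.univ.filter (fun p : Fin n × Fin n => p.1 < p.2),
                  (if h : p.1 < p.2 then u ⟨p, h⟩ * z p.2 p.1 else 0) :=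
                (Finset.sum_filter_of_ne
                  (fun p _ hne => by by_contra h; rw [dif_neg h] at hne; exact hne rfl)).symm
            _ = ∑ p : {p : Fin n × Fin n // p.1 < p.2},
                  (if h : (p : Fin n × Fin n).1 < (p : Fin n × Fin n).2
                   then u ⟨(p : Fin n × Fin n), h⟩ *
                     z (p : Fin n × Fin n).2 (p : Fin n × Fin n).1 else 0) :=
                Finset.sum_subtype _ (fun p => by simp) _
            _ = ∑ p : {p : Fin n × Fin n // p.1 < p.2}, u p * z p.1.2 p.1.1 :=
                Finset.sum_congr rfl fun p _ => by rw [dif_pos p.2]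

private lemma triEquiv_diag (t : Fin n → F) (u : {p : Fin n × Fin n // p.1 < p.2} → F)
    (l : {p : Fin n × Fin n // p.2 < p.1} → F) (i : Fin n) :
    (triEquiv n F (t, u, l) : Matrix (Fin n) (Fin n) F) i i = t i := by
  simp [triEquiv]

private lemma triEquiv_cond (t : Fin n → F) (u : {p : Fin n × Fin n // p.1 < p.2} → F)
    (l : {p : Fin n × Fin n // p.2 < p.1} → F) :
    (∀ i j : Fin n, j < i → (triEquiv n F (t, u, l) : Matrix (Fin n) (Fin n) F) i j = 0)
      ↔ l = 0 := by
  constructor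
  · intro h
    funext p
    have := h p.1.1 p.1.2 p.2
    simp only [triEquiv, Equiv.coe_fn_mk, Matrix.of_apply] at this
    rwa [dif_neg (lt_asymm p.2), dif_pos p.2] at this
  · intro h i j hji
    subst h
    simp only [triEquiv, Equiv.coe_fn_mk, Matrix.of_apply]
    rw [dif_neg (lt_asymm hji), dif_pos hji, Pi.zero_apply]

/-- Conjugation by `g` as an equivalence of the matrix space. -/
private def conjEquiv (g : GL (Fin n) F) :
    Matrix (Fin n) (Fin n) F ≃ Matrix (Fin n) (Fin n) F where
  toFun b := (g : Matrix (Fin n) (Fin n) F) * b *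
    ((g⁻¹ : GL (Fin n) F) : Matrix (Fin n) (Fin n) F)
  invFun x := ((g⁻¹ : GL (Fin n) F) : Matrix (Fin n) (Fin n) F) * x *
    (g : Matrix (Fin n) (Fin n) F)
  left_inv b := by
    simp only [mul_assoc]
    rw [Units.inv_mul, mul_one, Units.inv_mul_cancel_left]
  right_inv x := by
    simp only [mul_assoc]
    rw [Units.mul_inv, mul_one, Units.mul_inv_cancel_left]

private lemma conjEquiv_apply (g : GL (Fin n) F) (b : Matrix (Fin n) (Fin n) F) :
    conjEquiv g b = (g : Matrix (Fin n) (Fin n) F) * b *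
      ((g⁻¹ : GL (Fin n) F) : Matrix (Fin n) (Fin n) F) := rfl

/-- The key computation: the Fourier transform of the "upper triangular with given action
on diagonal" indicator sum. -/
private lemma innerSumAux (ψ : AddChar F ℂ) (hψ : ψ ≠ 1) (f : (Fin n → F) → ℂ)
    (z : Matrix (Fin n) (Fin n) F) :
    ∑ b : Matrix (Fin n) (Fin n) F,
        (if ∀ i j : Fin n, j < i → b i j = 0
         then ψ ((b * z).trace) * f (fun i => b i i) else 0)
      = (Fintype.card F : ℂ) ^ (n * (n - 1) / 2) *
          (if ∀ i j : Fin n, j < i → z i j = 0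
           then ∑ t : Fin n → F, f t * ψ (∑ i, t i * z i i) else 0) := by
  rw [← Equiv.sum_comp (triEquiv n F) (fun b =>
      if ∀ i j : Fin n, j < i → b i j = 0
      then ψ ((b * z).trace) * f (fun i => b i i) else 0)]
  rw [Fintype.sum_prod_type]
  simp only [Fintype.sum_prod_type]
  have step1 : ∀ (t : Fin n → F) (u : {p : Fin n × Fin n // p.1 < p.2} → F)
      (l : {p : Fin n × Fin n // p.2 < p.1} → F),
      (if ∀ i j : Fin n, j < i → (triEquiv n F (t, u, l) : Matrix (Fin n) (Fin n) F) i j = 0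
       then ψ (((triEquiv n F (t, u, l) : Matrix (Fin n) (Fin n) F) * z).trace) *
         f (fun i => (triEquiv n F (t, u, l) : Matrix (Fin n) (Fin n) F) i i)
       else 0)
      = if l = 0 then (ψ (∑ i, t i * z i i) *
          ψ (∑ p : {p : Fin n × Fin n // p.1 < p.2}, u p * z p.1.2 p.1.1)) * f t else 0 := by
    intro t u l
    by_cases hl : l = 0
    · subst hl
      rw [if_pos ((triEquiv_cond t u 0).mpr rfl), if_pos rfl]
      rw [triEquiv_trace, AddChar.map_add_eq_mul]
      have hd : (fun i => (triEquiv n F (t, u, (0 : {p : Fin n × Fin n // p.2 < p.1} → F))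
          : Matrix (Fin n) (Fin n) F) i i) = t := funext fun i => triEquiv_diag t u 0 i
      rw [hd]
    · rw [if_neg (fun h => hl ((triEquiv_cond t u l).mp h)), if_neg hl]
  simp only [step1]
  simp only [Finset.sum_ite_eq', Finset.mem_univ, if_true]
  have hB : (∑ u : {p : Fin n × Fin n // p.1 < p.2} → F,
      ψ (∑ p : {p : Fin n × Fin n // p.1 < p.2}, u p * z p.1.2 p.1.1))
      = if ∀ i j : Fin n, j < i → z i j = 0
        then (Fintype.card F : ℂ) ^ (n * (n - 1) / 2) else 0 := by
    rw [sum_pi_char ψ hψ (fun p : {p : Fin n × Fin n // p.1 < p.2} => z p.1.2 p.1.1),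
      card_lt_pairs n]
    refine if_congr ⟨fun h i j hji => h ⟨(j, i), hji⟩, fun h p => h p.1.2 p.1.1 p.2⟩ rfl rfl
  rw [Finset.sum_comm]
  have hstep : ∀ u : {p : Fin n × Fin n // p.1 < p.2} → F,
      (∑ t : Fin n → F, (ψ (∑ i, t i * z i i) *
          ψ (∑ p : {p : Fin n × Fin n // p.1 < p.2}, u p * z p.1.2 p.1.1)) * f t)
      = ψ (∑ p : {p : Fin n × Fin n // p.1 < p.2}, u p * z p.1.2 p.1.1) *
          ∑ t : Fin n → F, f t * ψ (∑ i, t i * z i i) := by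
    intro u
    rw [Finset.mul_sum]
    exact Finset.sum_congr rfl fun t _ => by ring
  simp only [hstep]
  rw [← Finset.sum_mul, hB]
  by_cases h : ∀ i j : Fin n, j < i → z i j = 0
  · rw [if_pos h, if_pos h]
  · rw [if_neg h, if_neg h, zero_mul, mul_zero]

end Aux


/-- the Fourier transform on `𝔤 = M_n(F)` with respect to the trace
pairing commutes with induction from the Cartan:
`Σ_{x ∈ 𝔤} ψ(tr(xy))·J(f)(x) = q^{n(n-1)/2} · J(f̂)(y)` where
`f̂(t') = Σ_{t ∈ 𝔱} f(t)·ψ(tr(t t'))`. -/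
theorem fourier_comm_ind_lie {F : Type} [Field F] [Fintype F] [DecidableEq F]
    (ψ : AddChar F ℂ) (hψ : ψ ≠ 1) {n : ℕ} (f : (Fin n → F) → ℂ)
    (y : Matrix (Fin n) (Fin n) F) :
    ∑ x : Matrix (Fin n) (Fin n) F, ψ ((x * y).trace) * indLie f x
      = (Fintype.card F : ℂ) ^ (n * (n - 1) / 2) *
        indLie (fun t' => ∑ t : Fin n → F, f t * ψ (∑ i, t i * t' i)) y := by
  unfold indLie
  simp only [Finset.mul_sum]
  rw [Finset.sum_comm]
  refine Finset.sum_congr rfl fun g _ => ?_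
  set e := conjEquiv (F := F) g with he
  rw [← Equiv.sum_comp e (fun x => ψ ((x * y).trace) *
    if ∀ i j : Fin n, j < i →
        (((g⁻¹ : GL (Fin n) F) : Matrix (Fin n) (Fin n) F) * x *
          (g : Matrix (Fin n) (Fin n) F)) i j = 0
    then f (fun i => (((g⁻¹ : GL (Fin n) F) : Matrix (Fin n) (Fin n) F) * x *
          (g : Matrix (Fin n) (Fin n) F)) i i)
    else 0)]
  have hconj : ∀ b : Matrix (Fin n) (Fin n) F,
      ((g⁻¹ : GL (Fin n) F) : Matrix (Fin n) (Fin n) F) * e b *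
        (g : Matrix (Fin n) (Fin n) F) = b := by
    intro b
    rw [he, conjEquiv_apply]
    simp only [mul_assoc]
    rw [Units.inv_mul, mul_one, Units.inv_mul_cancel_left]
  have htr : ∀ b : Matrix (Fin n) (Fin n) F,
      ((e b * y).trace)
        = (b * (((g⁻¹ : GL (Fin n) F) : Matrix (Fin n) (Fin n) F) * y *
            (g : Matrix (Fin n) (Fin n) F))).trace := by
    intro b
    rw [he, conjEquiv_apply]
    rw [show ((g : Matrix (Fin n) (Fin n) F) * b *
        ((g⁻¹ : GL (Fin n) F) : Matrix (Fin n) (Fin n) F)) * y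
      = (g : Matrix (Fin n) (Fin n) F) *
        (b * (((g⁻¹ : GL (Fin n) F) : Matrix (Fin n) (Fin n) F) * y)) from by
        simp only [mul_assoc]]
    rw [Matrix.trace_mul_comm]
    simp only [mul_assoc]
  calc ∑ b : Matrix (Fin n) (Fin n) F, (ψ ((e b * y).trace) *
        if ∀ i j : Fin n, j < i →
            (((g⁻¹ : GL (Fin n) F) : Matrix (Fin n) (Fin n) F) * e b *
              (g : Matrix (Fin n) (Fin n) F)) i j = 0
        then f (fun i => (((g⁻¹ : GL (Fin n) F) : Matrix (Fin n) (Fin n) F) * e b *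
              (g : Matrix (Fin n) (Fin n) F)) i i)
        else 0)
      = ∑ b : Matrix (Fin n) (Fin n) F,
          (if ∀ i j : Fin n, j < i → b i j = 0
           then ψ ((b * (((g⁻¹ : GL (Fin n) F) : Matrix (Fin n) (Fin n) F) * y *
              (g : Matrix (Fin n) (Fin n) F))).trace) * f (fun i => b i i) else 0) := by
        refine Finset.sum_congr rfl fun b _ => ?_
        simp only [hconj b, htr b, mul_ite, mul_zero]
    _ = _ := by
        rw [innerSumAux ψ hψ f]
        congr
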